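/- Let Γ be a finite simple graph each of whose edges is colored red, green, or blue, and suppose that: (a) for every pair of edges e1, e2 of distinct colors c1 and c2, some edge of the third color joins an endpoint of e1 to an endpoint of e2; and (b) there exists an integer d ≥ 1 such that every vertex of Γ is incident to exactly d red, exactly d green, and exactly d blue edges. Then Γ is a balanced blowup of a properly 3-edge-colored K4. -/

import Mathlib

open scoped Classical

noncomputable section

namespace RainbowTri

variable {V : Type*} [Fintype V]

/-- The finset of edges of `Γ` having color `c` (red = 0, green = 1, blue = 2). -/
def colorEdges (Γ : SimpleGraph V) (col : Sym2 V → Fin 3) (c : Fin 3) : Finset (Sym2 V) :=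
  Finset.univ.filter (fun e => e ∈ Γ.edgeSet ∧ col e = c)

/-- The finset of rainbow triangles: 3-sets of pairwise adjacent vertices whose three
edges receive three distinct colors. -/
def rainbowTriangles (Γ : SimpleGraph V) (col : Sym2 V → Fin 3) : Finset (Finset V) :=
  Finset.univ.filter (fun s => ∃ a b c : V, s = {a, b, c} ∧
    Γ.Adj a b ∧ Γ.Adj a c ∧ Γ.Adj b c ∧
    col s(a, b) ≠ col s(a, c) ∧ col s(a, b) ≠ col s(b, c) ∧ col s(a, c) ≠ col s(b, c))

/-- The finset of properly 3-edge-colored copies of `K₄`: 4-sets of pairwise adjacent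
vertices on which each color appears on exactly two (disjoint) of the six edges. -/
def properK4s (Γ : SimpleGraph V) (col : Sym2 V → Fin 3) : Finset (Finset V) :=
  Finset.univ.filter (fun s => ∃ a b c d : V, s = {a, b, c, d} ∧
    Γ.Adj a b ∧ Γ.Adj a c ∧ Γ.Adj a d ∧ Γ.Adj b c ∧ Γ.Adj b d ∧ Γ.Adj c d ∧
    col s(a, b) = col s(c, d) ∧ col s(a, c) = col s(b, d) ∧ col s(a, d) = col s(b, c) ∧
    col s(a, b) ≠ col s(a, c) ∧ col s(a, b) ≠ col s(a, d) ∧ col s(a, c) ≠ col s(a, d))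

/-- The color pattern of a proper 3-edge-coloring of `K₄` on vertex set `Fin 4`:
opposite edges get the same color ({0,1},{2,3} ↦ 0; {0,2},{1,3} ↦ 1; {0,3},{1,2} ↦ 2). -/
def pairColor (i j : Fin 4) : Fin 3 :=
  ⟨((i.val ^^^ j.val) - 1) % 3, Nat.mod_lt _ (by norm_num)⟩

/-- `Γ` (with edge coloring `col`) is obtained from a blowup of a properly
3-edge-colored `K₄` by possibly adding a set of isolated vertices: vertices mapped to
`none` are isolated, vertices are adjacent iff they lie in distinct parts, and colors
between parts follow the proper `K₄`-pattern up to a permutation `σ` of the colors. -/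
def IsBlowupK4PlusIsolated (Γ : SimpleGraph V) (col : Sym2 V → Fin 3) : Prop :=
  ∃ (P : V → Option (Fin 4)) (σ : Equiv.Perm (Fin 3)),
    (∀ u v : V, Γ.Adj u v ↔ ∃ i j : Fin 4, i ≠ j ∧ P u = some i ∧ P v = some j) ∧
    (∀ (u v : V) (i j : Fin 4), P u = some i → P v = some j → Γ.Adj u v →
      col s(u, v) = σ (pairColor i j))

/-- As `IsBlowupK4PlusIsolated`, where moreover the four parts have equal size. -/
def IsBalancedBlowupK4PlusIsolated (Γ : SimpleGraph V) (col : Sym2 V → Fin 3) : Prop :=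
  ∃ (P : V → Option (Fin 4)) (σ : Equiv.Perm (Fin 3)),
    (∀ u v : V, Γ.Adj u v ↔ ∃ i j : Fin 4, i ≠ j ∧ P u = some i ∧ P v = some j) ∧
    (∀ (u v : V) (i j : Fin 4), P u = some i → P v = some j → Γ.Adj u v →
      col s(u, v) = σ (pairColor i j)) ∧
    (∀ i j : Fin 4, (Finset.univ.filter (fun v => P v = some i)).card
      = (Finset.univ.filter (fun v => P v = some j)).card)

/-- `Γ` (with edge coloring `col`) is a balanced blowup of a properly 3-edge-colored
`K₄` (no extra isolated vertices). -/
def IsBalancedBlowupK4 (Γ : SimpleGraph V) (col : Sym2 V → Fin 3) : Prop :=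
  ∃ (P : V → Fin 4) (σ : Equiv.Perm (Fin 3)),
    (∀ u v : V, Γ.Adj u v ↔ P u ≠ P v) ∧
    (∀ u v : V, Γ.Adj u v → col s(u, v) = σ (pairColor (P u) (P v))) ∧
    (∀ i j : Fin 4, (Finset.univ.filter (fun v => P v = i)).card
      = (Finset.univ.filter (fun v => P v = j)).card)

/-- `d⁺(u,v)`: the number of vertices `w` with `uw` blue and `vw` green. -/
def dPlus (Γ : SimpleGraph V) (col : Sym2 V → Fin 3) (u v : V) : ℕ :=
  (Finset.univ.filter (fun w => Γ.Adj u w ∧ col s(u, w) = 2 ∧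
    Γ.Adj v w ∧ col s(v, w) = 1)).card

/-- `d⁻(u,v)`: the number of vertices `w` with `uw` green and `vw` blue. -/
def dMinus (Γ : SimpleGraph V) (col : Sym2 V → Fin 3) (u v : V) : ℕ :=
  (Finset.univ.filter (fun w => Γ.Adj u w ∧ col s(u, w) = 1 ∧
    Γ.Adj v w ∧ col s(v, w) = 2)).card

/-- `d_K(u,v)`: the number of ordered pairs `(w,x)` with `wx` red, `uw`, `vx` green
and `ux`, `vw` blue. -/
def dK (Γ : SimpleGraph V) (col : Sym2 V → Fin 3) (u v : V) : ℕ :=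
  (Finset.univ.filter (fun p : V × V => Γ.Adj p.1 p.2 ∧ col s(p.1, p.2) = 0 ∧
    Γ.Adj u p.1 ∧ col s(u, p.1) = 1 ∧ Γ.Adj v p.2 ∧ col s(v, p.2) = 1 ∧
    Γ.Adj u p.2 ∧ col s(u, p.2) = 2 ∧ Γ.Adj v p.1 ∧ col s(v, p.1) = 2)).card

/-- Ordered pairs of vertices inducing a red edge. -/
def redPairs (Γ : SimpleGraph V) (col : Sym2 V → Fin 3) : Finset (V × V) :=
  Finset.univ.filter (fun p => Γ.Adj p.1 p.2 ∧ col s(p.1, p.2) = 0)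

/-- The set `S` of ordered tuples `(u,v,x,y)` with `uv` red, `ux`, `uy` blue and
`vx`, `vy` green (`x = y` allowed). -/
def tupleSet (Γ : SimpleGraph V) (col : Sym2 V → Fin 3) : Finset (V × V × V × V) :=
  Finset.univ.filter (fun t => Γ.Adj t.1 t.2.1 ∧ col s(t.1, t.2.1) = 0 ∧
    Γ.Adj t.1 t.2.2.1 ∧ col s(t.1, t.2.2.1) = 2 ∧
    Γ.Adj t.1 t.2.2.2 ∧ col s(t.1, t.2.2.2) = 2 ∧
    Γ.Adj t.2.1 t.2.2.1 ∧ col s(t.2.1, t.2.2.1) = 1 ∧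
    Γ.Adj t.2.1 t.2.2.2 ∧ col s(t.2.1, t.2.2.2) = 1)

/-- The `c`-colored neighborhood of a vertex `z`. -/
def nbr (Γ : SimpleGraph V) (col : Sym2 V → Fin 3) (z : V) (c : Fin 3) : Finset V :=
  Finset.univ.filter (fun w => Γ.Adj z w ∧ col s(z, w) = c)

lemma mem_nbr {Γ : SimpleGraph V} {col : Sym2 V → Fin 3} {z w : V} {c : Fin 3} :
    w ∈ nbr Γ col z c ↔ Γ.Adj z w ∧ col s(z, w) = c := by simp [nbr]

/-- The transition table: a vertex in part `i` has its `c`-colored neighborhood in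
part `tbl i c`. -/
def tbl (i : Fin 4) (c : Fin 3) : Fin 4 :=
  if i = 0 then (if c = 0 then 1 else if c = 1 then 2 else 3)
  else if i = 1 then (if c = 0 then 0 else if c = 1 then 3 else 2)
  else if i = 2 then (if c = 0 then 3 else if c = 1 then 0 else 1)
  else (if c = 0 then 2 else if c = 1 then 1 else 0)

lemma tbl_ne : ∀ (i : Fin 4) (c : Fin 3), tbl i c ≠ i := by decide

lemma tbl_pairColor : ∀ (i : Fin 4) (c : Fin 3), pairColor i (tbl i c) = c := by decide

lemma pairColor_tbl : ∀ i j : Fin 4, i ≠ j → tbl i (pairColor i j) = j := by decide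

lemma fin3_third : ∀ x c1 c2 c3 : Fin 3, c1 ≠ c2 → c1 ≠ c3 → c2 ≠ c3 →
    x ≠ c1 → x ≠ c2 → x = c3 := by decide

/-- If (a) for every pair of edges of distinct colors some edge of the third color
joins an endpoint of one to an endpoint of the other, and (b) there is a `d ≥ 1` such
that every vertex is incident to exactly `d` edges of each color, then `Γ` is a
balanced blowup of a properly 3-edge-colored `K₄`. -/
theorem stmt8 (Γ : SimpleGraph V) (col : Sym2 V → Fin 3)
    (ha : ∀ a b a' b' : V, Γ.Adj a b → Γ.Adj a' b' → col s(a, b) ≠ col s(a', b') →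
      ∃ x y : V, (x = a ∨ x = b) ∧ (y = a' ∨ y = b') ∧ Γ.Adj x y ∧
        col s(x, y) ≠ col s(a, b) ∧ col s(x, y) ≠ col s(a', b'))
    (hb : ∃ d : ℕ, 1 ≤ d ∧ ∀ v : V, ∀ c : Fin 3,
      (Finset.univ.filter (fun w => Γ.Adj v w ∧ col s(v, w) = c)).card = d) :
    IsBalancedBlowupK4 Γ col := by
  classical
  obtain ⟨d, hd1, hb⟩ := hb
  have hbN : ∀ (v : V) (c : Fin 3), (nbr Γ col v c).card = d := hb
  -- two edges of distinct colors at a common vertex close into a rainbow triangle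
  have tri : ∀ a b c : V, Γ.Adj a b → Γ.Adj a c → col s(a, b) ≠ col s(a, c) →
      Γ.Adj b c ∧ col s(b, c) ≠ col s(a, b) ∧ col s(b, c) ≠ col s(a, c) := by
    intro a b c hab hac hcne
    obtain ⟨x, y, hx, hy, hxy, h1, h2⟩ := ha a b a c hab hac hcne
    rcases hx with rfl | rfl <;> rcases hy with rfl | rfl
    · exact absurd hxy (Γ.loopless.irrefl _)
    · exact absurd rfl h2
    · exact absurd (congrArg col Sym2.eq_swap) h1
    · exact ⟨hxy, h1, h2⟩
  -- the swap lemma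
  have swap : ∀ (u v : V) (c1 c2 c3 : Fin 3), Γ.Adj u v → col s(u, v) = c1 →
      c1 ≠ c2 → c1 ≠ c3 → c2 ≠ c3 → nbr Γ col u c2 = nbr Γ col v c3 := by
    intro u v c1 c2 c3 huv hcol h12 h13 h23
    have hsub : nbr Γ col u c2 ⊆ nbr Γ col v c3 := by
      intro w hw
      rw [mem_nbr] at hw ⊢
      obtain ⟨hadj, hc⟩ := hw
      have hcne : col s(u, v) ≠ col s(u, w) := by rw [hcol, hc]; exact h12
      obtain ⟨hvw, n1, n2⟩ := tri u v w huv hadj hcne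
      rw [hcol] at n1; rw [hc] at n2
      exact ⟨hvw, fin3_third _ c1 c2 c3 h12 h13 h23 n1 n2⟩
    exact Finset.eq_of_subset_of_card_le hsub (by rw [hbN, hbN])
  have memS : ∀ (a b : V) (c : Fin 3), Γ.Adj a b → col s(a, b) = c →
      a ∈ nbr Γ col b c := by
    intro a b c h hc
    rw [mem_nbr]
    exact ⟨h.symm, by rw [Sym2.eq_swap]; exact hc⟩
  cases isEmpty_or_nonempty V with
  | inl hV =>
    refine ⟨fun _ => 0, Equiv.refl _, fun u v => isEmptyElim u,
      fun u v h => isEmptyElim u, fun i j => ?_⟩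
    simp [Finset.univ_eq_empty]
  | inr hV =>
    obtain ⟨u0⟩ := hV
    have hnbrne : ∀ (z : V) (c : Fin 3), (nbr Γ col z c).Nonempty := by
      intro z c; rw [← Finset.card_pos, hbN]; omega
    obtain ⟨x0, hx0⟩ := hnbrne u0 1
    obtain ⟨w0, hw0⟩ := hnbrne u0 2
    rw [mem_nbr] at hx0 hw0
    set pt : Fin 4 → Finset V := fun i =>
      if i = 0 then nbr Γ col x0 1 else if i = 1 then nbr Γ col u0 0
      else if i = 2 then nbr Γ col u0 1 else nbr Γ col u0 2 with hpt
    have pt0 : pt 0 = nbr Γ col x0 1 := by simp [hpt]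
    have pt1 : pt 1 = nbr Γ col u0 0 := by simp [hpt]
    have pt2 : pt 2 = nbr Γ col u0 1 := by simp [hpt]
    have pt3 : pt 3 = nbr Γ col u0 2 := by simp [hpt]
    -- basic swap facts
    have hB0 : nbr Γ col x0 0 = nbr Γ col u0 2 :=
      (swap u0 x0 1 2 0 hx0.1 hx0.2 (by decide) (by decide) (by decide)).symm
    have hB2 : nbr Γ col x0 2 = nbr Γ col u0 0 :=
      (swap u0 x0 1 0 2 hx0.1 hx0.2 (by decide) (by decide) (by decide)).symm
    have hC0 : nbr Γ col w0 0 = nbr Γ col u0 1 :=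
      (swap u0 w0 2 1 0 hw0.1 hw0.2 (by decide) (by decide) (by decide)).symm
    have hC1 : nbr Γ col w0 1 = nbr Γ col u0 0 :=
      (swap u0 w0 2 0 1 hw0.1 hw0.2 (by decide) (by decide) (by decide)).symm
    have hw0x : w0 ∈ nbr Γ col x0 0 := by
      rw [hB0, mem_nbr]; exact hw0
    rw [mem_nbr] at hw0x
    have hC2 : nbr Γ col w0 2 = nbr Γ col x0 1 :=
      (swap x0 w0 0 1 2 hw0x.1 hw0x.2 (by decide) (by decide) (by decide)).symm
    -- the four per-part local structure lemmas
    have hP1 : ∀ v ∈ nbr Γ col u0 0, nbr Γ col v 0 = nbr Γ col x0 1 ∧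
        nbr Γ col v 1 = nbr Γ col u0 2 ∧ nbr Γ col v 2 = nbr Γ col u0 1 := by
      intro v hv
      have hv' := hv; rw [mem_nbr] at hv'
      have hvx : v ∈ nbr Γ col x0 2 := by rw [hB2]; exact hv
      rw [mem_nbr] at hvx
      exact ⟨(swap x0 v 2 1 0 hvx.1 hvx.2 (by decide) (by decide) (by decide)).symm,
        (swap u0 v 0 2 1 hv'.1 hv'.2 (by decide) (by decide) (by decide)).symm,
        (swap u0 v 0 1 2 hv'.1 hv'.2 (by decide) (by decide) (by decide)).symm⟩
    have hP2 : ∀ x ∈ nbr Γ col u0 1, nbr Γ col x 0 = nbr Γ col u0 2 ∧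
        nbr Γ col x 1 = nbr Γ col x0 1 ∧ nbr Γ col x 2 = nbr Γ col u0 0 := by
      intro x hx
      have hx' := hx; rw [mem_nbr] at hx'
      have hxw : x ∈ nbr Γ col w0 0 := by rw [hC0]; exact hx
      rw [mem_nbr] at hxw
      exact ⟨(swap u0 x 1 2 0 hx'.1 hx'.2 (by decide) (by decide) (by decide)).symm,
        ((swap w0 x 0 2 1 hxw.1 hxw.2 (by decide) (by decide) (by decide)).symm).trans hC2,
        (swap u0 x 1 0 2 hx'.1 hx'.2 (by decide) (by decide) (by decide)).symm⟩
    have hP3 : ∀ w ∈ nbr Γ col u0 2, nbr Γ col w 0 = nbr Γ col u0 1 ∧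
        nbr Γ col w 1 = nbr Γ col u0 0 ∧ nbr Γ col w 2 = nbr Γ col x0 1 := by
      intro w hw
      have hw' := hw; rw [mem_nbr] at hw'
      have hwx : w ∈ nbr Γ col x0 0 := by rw [hB0]; exact hw
      rw [mem_nbr] at hwx
      exact ⟨(swap u0 w 2 1 0 hw'.1 hw'.2 (by decide) (by decide) (by decide)).symm,
        (swap u0 w 2 0 1 hw'.1 hw'.2 (by decide) (by decide) (by decide)).symm,
        (swap x0 w 0 1 2 hwx.1 hwx.2 (by decide) (by decide) (by decide)).symm⟩
    have hP0 : ∀ r ∈ nbr Γ col x0 1, nbr Γ col r 0 = nbr Γ col u0 0 ∧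
        nbr Γ col r 1 = nbr Γ col u0 1 ∧ nbr Γ col r 2 = nbr Γ col u0 2 := by
      intro r hr
      have hr' := hr; rw [mem_nbr] at hr'
      have hrw : r ∈ nbr Γ col w0 2 := by rw [hC2]; exact hr
      rw [mem_nbr] at hrw
      exact ⟨((swap x0 r 1 2 0 hr'.1 hr'.2 (by decide) (by decide) (by decide)).symm).trans hB2,
        ((swap w0 r 2 0 1 hrw.1 hrw.2 (by decide) (by decide) (by decide)).symm).trans hC0,
        ((swap x0 r 1 0 2 hr'.1 hr'.2 (by decide) (by decide) (by decide)).symm).trans hB0⟩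
    -- the uniform transition lemma
    have hmem : ∀ (z : V) (i : Fin 4), z ∈ pt i → ∀ c : Fin 3,
        nbr Γ col z c = pt (tbl i c) := by
      intro z i hz c
      fin_cases i <;> fin_cases c
      · exact (hP0 z hz).1
      · exact (hP0 z hz).2.1
      · exact (hP0 z hz).2.2
      · exact (hP1 z hz).1
      · exact (hP1 z hz).2.1
      · exact (hP1 z hz).2.2
      · exact (hP2 z hz).1
      · exact (hP2 z hz).2.1
      · exact (hP2 z hz).2.2
      · exact (hP3 z hz).1
      · exact (hP3 z hz).2.1
      · exact (hP3 z hz).2.2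
    -- coverage
    have cover : ∀ z : V, ∃ i, z ∈ pt i := by
      intro z
      obtain ⟨z', hz'⟩ := hnbrne z 0
      rw [mem_nbr] at hz'
      have hcolne : col s(z, z') ≠ col s(u0, x0) := by
        rw [hz'.2, hx0.2]; decide
      obtain ⟨x, y, hx, hy, hxy, h1, h2⟩ := ha z z' u0 x0 hz'.1 hx0.1 hcolne
      rw [hz'.2] at h1; rw [hx0.2] at h2
      have hcxy : col s(x, y) = 2 :=
        fin3_third _ 0 1 2 (by decide) (by decide) (by decide) h1 h2
      have hxmem : x ∈ nbr Γ col y 2 := memS x y 2 hxy hcxy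
      have hx_part : x ∈ pt 3 ∨ x ∈ pt 1 := by
        rcases hy with rfl | rfl
        · left; rw [pt3]; exact hxmem
        · right; rw [pt1, ← hB2]; exact hxmem
      have hz_in : z ∈ nbr Γ col z' 0 := memS z z' 0 hz'.1 hz'.2
      rcases hx with rfl | rfl
      · exact hx_part.elim (fun h => ⟨3, h⟩) (fun h => ⟨1, h⟩)
      · rcases hx_part with h | h
        · exact ⟨tbl 3 0, by rw [← hmem x 3 h 0]; exact hz_in⟩
        · exact ⟨tbl 1 0, by rw [← hmem x 1 h 0]; exact hz_in⟩
    -- disjointness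
    have base : ∀ (y z : V) (c c' : Fin 3), c ≠ c' →
        z ∈ nbr Γ col y c → z ∈ nbr Γ col y c' → False := by
      intro y z c c' hcc h1 h2
      rw [mem_nbr] at h1 h2
      exact hcc (h1.2.symm.trans h2.2)
    have disj : ∀ i j : Fin 4, i ≠ j → ∀ z, z ∈ pt i → z ∈ pt j → False := by
      intro i j hij z h1 h2
      fin_cases i <;> fin_cases j
      · exact hij rfl
      · exact base x0 z 1 2 (by decide) h1 (by rw [hB2]; exact h2)
      · exact base w0 z 2 0 (by decide) (by rw [hC2]; exact h1) (by rw [hC0]; exact h2)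
      · exact base x0 z 1 0 (by decide) h1 (by rw [hB0]; exact h2)
      · exact base x0 z 2 1 (by decide) (by rw [hB2]; exact h1) h2
      · exact hij rfl
      · exact base u0 z 0 1 (by decide) h1 h2
      · exact base u0 z 0 2 (by decide) h1 h2
      · exact base w0 z 0 2 (by decide) (by rw [hC0]; exact h1) (by rw [hC2]; exact h2)
      · exact base u0 z 1 0 (by decide) h1 h2
      · exact hij rfl
      · exact base u0 z 1 2 (by decide) h1 h2
      · exact base x0 z 0 1 (by decide) (by rw [hB0]; exact h1) h2
      · exact base u0 z 2 0 (by decide) h1 h2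
      · exact base u0 z 2 1 (by decide) h1 h2
      · exact hij rfl
    -- the part function
    set Pf : V → Fin 4 := fun z =>
      if z ∈ pt 0 then 0 else if z ∈ pt 1 then 1 else if z ∈ pt 2 then 2 else 3 with hPf
    have memPf : ∀ z, z ∈ pt (Pf z) := by
      intro z
      simp only [hPf]
      split_ifs with h0 h1 h2
      · exact h0
      · exact h1
      · exact h2
      · obtain ⟨i, hi⟩ := cover z
        fin_cases i
        · exact absurd hi h0
        · exact absurd hi h1
        · exact absurd hi h2
        · exact hi
    have PfEq : ∀ z i, z ∈ pt i → Pf z = i := by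
      intro z i hz
      by_contra hc
      exact disj _ _ hc z (memPf z) hz
    refine ⟨Pf, Equiv.refl _, ?_, ?_, ?_⟩
    · intro u v
      constructor
      · intro hadj
        have hv : v ∈ nbr Γ col u (col s(u, v)) := mem_nbr.mpr ⟨hadj, rfl⟩
        rw [hmem u (Pf u) (memPf u) (col s(u, v))] at hv
        have hPv := PfEq v _ hv
        rw [hPv]
        exact fun h => tbl_ne (Pf u) (col s(u, v)) h.symm
      · intro hne
        have hv := memPf v
        have h1 := hmem u (Pf u) (memPf u) (pairColor (Pf u) (Pf v))
        rw [pairColor_tbl _ _ hne] at h1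
        rw [← h1] at hv
        exact (mem_nbr.mp hv).1
    · intro u v hadj
      simp only [Equiv.refl_apply]
      have hv : v ∈ nbr Γ col u (col s(u, v)) := mem_nbr.mpr ⟨hadj, rfl⟩
      rw [hmem u (Pf u) (memPf u) (col s(u, v))] at hv
      have hPv := PfEq v _ hv
      rw [hPv, tbl_pairColor]
    · intro i j
      have hfe : ∀ k : Fin 4, Finset.univ.filter (fun v => Pf v = k) = pt k := by
        intro k
        ext z
        simp only [Finset.mem_filter, Finset.mem_univ, true_and]
        exact ⟨fun h => h ▸ memPf z, fun h => PfEq z k h⟩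
      have hcard : ∀ k : Fin 4, (pt k).card = d := by
        intro k
        fin_cases k
        · exact hbN x0 1
        · exact hbN u0 0
        · exact hbN u0 1
        · exact hbN u0 2
      rw [hfe, hfe, hcard, hcard]

end RainbowTri
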